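/- Let N ≥ 3 and let σ : ℤ/Nℤ → {−1,+1} be non-constant with exactly c maximal monochromatic arcs of value +1 (equivalently, c maximal monochromatic arcs of value −1). If A is any maximal monochromatic arc of σ, then: if c = 1 the flipped configuration σ^A is constant, and if c ≥ 2 the flipped configuration σ^A is non-constant with exactly c − 1 maximal monochromatic arcs of value +1 (and c − 1 of value −1). -/

import Mathlib

open Real Finset

noncomputable section

/-- Spin value of a Boolean: `true ↦ +1`, `false ↦ -1`. -/
def spin (b : Bool) : ℝ := if b then 1 else -1

/-- Configurations of the 1D Ising model on the cycle `ZMod N`. -/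
abbrev Config (N : ℕ) := ZMod N → Bool

/-- Flip the spins of `σ` at all sites of `A`. -/
def flipSpins {N : ℕ} (A : Finset (ZMod N)) (σ : Config N) : Config N :=
  fun i => if i ∈ A then !(σ i) else σ i

/-- `A` is a (nonempty) arc `{a, a+1, …, a+k}` of the cycle. -/
def IsArc {N : ℕ} (A : Finset (ZMod N)) : Prop :=
  ∃ (a : ZMod N) (k : ℕ),
    A = Finset.image (fun t : ℕ => a + (t : ZMod N)) (Finset.range (k + 1))

/-- `σ` is constant on `A`. -/
def ConstOn {N : ℕ} (σ : Config N) (A : Finset (ZMod N)) : Prop :=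
  ∀ i ∈ A, ∀ j ∈ A, σ i = σ j

/-- The set of sites where two configurations differ. -/
def diffSet {N : ℕ} [NeZero N] (σ η : Config N) : Finset (ZMod N) :=
  Finset.univ.filter fun i => σ i ≠ η i

/-- The edge boundary of `A`: edges `(i, i+1)` with exactly one endpoint in `A`. -/
def edgeBoundary {N : ℕ} [NeZero N] (A : Finset (ZMod N)) : Finset (ZMod N) :=
  Finset.univ.filter fun i => ¬ ((i ∈ A) ↔ (i + 1 ∈ A))

/-- Edges `(i, i+1)` on which the spins of `σ` agree (i.e. `σ_i · σ_{i+1} = +1`). -/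
def Bplus {N : ℕ} [NeZero N] (σ : Config N) : Finset (ZMod N) :=
  Finset.univ.filter fun i => σ i = σ (i + 1)

open scoped Classical in
/-- Transition matrix of the Wolff dynamics for the 1D Ising model, with
`κ = 1 - e^{-2Ĵ}` and `κ̂ = e^{-2Ĵ}`. -/
noncomputable def PW (N : ℕ) [NeZero N] (J : ℝ) (σ η : Config N) : ℝ :=
  if IsArc (diffSet σ η) ∧ ConstOn σ (diffSet σ η) then
    if diffSet σ η = Finset.univ then
      ((N : ℝ) * exp (-2 * J) + (1 - exp (-2 * J))) * (1 - exp (-2 * J)) ^ (N - 1)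
    else
      ((diffSet σ η).card : ℝ) / N * (1 - exp (-2 * J)) ^ ((diffSet σ η).card - 1) *
        exp (-2 * J) ^ ((edgeBoundary (diffSet σ η) ∩ Bplus σ).card)
  else 0

/-- Energy functional `∑ i, σ_i σ_{i+1}` of a configuration. -/
noncomputable def energy (N : ℕ) [NeZero N] (σ : Config N) : ℝ :=
  ∑ i : ZMod N, spin (σ i) * spin (σ (i + 1))

/-- The Gibbs measure of the 1D Ising model with periodic boundary conditions. -/
noncomputable def gibbs (N : ℕ) [NeZero N] (J : ℝ) (σ : Config N) : ℝ :=
  exp (J * energy N σ) / ∑ η : Config N, exp (J * energy N η)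

/-- Expectation with respect to the Gibbs measure. -/
noncomputable def Emu (N : ℕ) [NeZero N] (J : ℝ) (f : Config N → ℝ) : ℝ :=
  ∑ σ : Config N, f σ * gibbs N J σ

/-- Dirichlet form of a transition matrix `P` with respect to a measure `μ`. -/
noncomputable def dirichlet (N : ℕ) [NeZero N] (P : Config N → Config N → ℝ)
    (μ : Config N → ℝ) (f : Config N → ℝ) : ℝ :=
  (1/2) * ∑ σ : Config N, ∑ η : Config N, (f σ - f η)^2 * P η σ * μ η

/-- `A` is a maximal monochromatic arc of `σ`: a maximal arc of the cycle on
which `σ` is constant. -/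
def IsMaxMonoArc {N : ℕ} (σ : Config N) (A : Finset (ZMod N)) : Prop :=
  IsArc A ∧ ConstOn σ A ∧
    ∀ B : Finset (ZMod N), IsArc B → ConstOn σ B → A ⊆ B → A = B

open scoped Classical in
/-- The number of maximal monochromatic arcs of `σ` on which `σ` is constantly
equal to the spin value `b` (`true ↦ +1`, `false ↦ −1`). -/
noncomputable def numArcs (N : ℕ) [NeZero N] (σ : Config N) (b : Bool) : ℕ :=
  (Finset.univ.filter fun A : Finset (ZMod N) =>
    IsMaxMonoArc σ A ∧ ∀ i ∈ A, σ i = b).card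

set_option linter.unusedSectionVars false

namespace FlipAux
variable {N : ℕ} [NeZero N]

lemma cast_val_eq (x : ZMod N) : ((x.val : ℕ) : ZMod N) = x := by
  rw [ZMod.natCast_val, ZMod.cast_id]

lemma natCast_inj {t s : ℕ} (ht : t < N) (hs : s < N) (h : (t : ZMod N) = s) : t = s := by
  have := congrArg ZMod.val h
  rwa [ZMod.val_cast_of_lt ht, ZMod.val_cast_of_lt hs] at this

def arc (a : ZMod N) (k : ℕ) : Finset (ZMod N) :=
  Finset.image (fun t : ℕ => a + (t : ZMod N)) (Finset.range (k + 1))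

lemma mem_arc {a : ZMod N} {k : ℕ} {x : ZMod N} :
    x ∈ arc a k ↔ ∃ t, t ≤ k ∧ a + (t : ZMod N) = x := by
  simp [arc, Nat.lt_succ_iff]

lemma isArc_arc (a : ZMod N) (k : ℕ) : IsArc (arc a k) := ⟨a, k, rfl⟩

lemma mem_arc_of_le {a : ZMod N} {k t : ℕ} (h : t ≤ k) : a + (t : ZMod N) ∈ arc a k :=
  mem_arc.mpr ⟨t, h, rfl⟩

lemma arc_eq_univ {a : ZMod N} {k : ℕ} (h : N ≤ k + 1) : arc a k = Finset.univ := by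
  apply Finset.eq_univ_of_forall
  intro x
  exact mem_arc.mpr ⟨(x - a).val, by
    have := ZMod.val_lt (x - a); omega, by rw [cast_val_eq]; ring⟩

/-- `a - 1 ∉ arc a k` when the arc is proper. -/
lemma pred_not_mem {a : ZMod N} {k : ℕ} (hk : k + 1 < N) : a - 1 ∉ arc a k := by
  intro h
  obtain ⟨t, ht, heq⟩ := mem_arc.mp h
  have h1 : 1 ≤ N := Nat.one_le_iff_ne_zero.mpr (NeZero.ne N)
  have hcast : ((N - 1 : ℕ) : ZMod N) = -1 := by
    push_cast [Nat.cast_sub h1]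
    rw [ZMod.natCast_self]; ring
  have : (t : ZMod N) = ((N - 1 : ℕ) : ZMod N) := by
    rw [hcast]
    have := heq
    linear_combination this - a + 1 - a
  have := natCast_inj (by omega) (by omega) this
  omega

/-- `a + (k+1) ∉ arc a k` when the arc is proper. -/
lemma succ_not_mem {a : ZMod N} {k : ℕ} (hk : k + 1 < N) :
    a + ((k + 1 : ℕ) : ZMod N) ∉ arc a k := by
  intro h
  obtain ⟨t, ht, heq⟩ := mem_arc.mp h
  have : (t : ZMod N) = ((k + 1 : ℕ) : ZMod N) := by
    have := heq
    linear_combination this - a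
  have := natCast_inj (by omega) hk this
  omega

/-- helper: `(a + k) - t = a + (k - t)` for `t ≤ k`. -/
lemma sub_cast (a : ZMod N) {t k : ℕ} (h : t ≤ k) :
    a + (k : ZMod N) - (t : ZMod N) = a + ((k - t : ℕ) : ZMod N) := by
  push_cast [Nat.cast_sub h]; ring

lemma exists_flip {σ : Config N} (hσ : ∃ i j : ZMod N, σ i ≠ σ j) (e : ZMod N) :
    ∃ x, σ x ≠ σ e := by
  obtain ⟨i, j, hij⟩ := hσ
  by_cases h : σ i = σ e
  · exact ⟨j, fun hj => hij (h.trans hj.symm)⟩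
  · exact ⟨i, h⟩

lemma mlen_ex {σ : Config N} (hσ : ∃ i j : ZMod N, σ i ≠ σ j) (e : ZMod N) :
    ∃ m : ℕ, σ (e - ((m + 1 : ℕ) : ZMod N)) ≠ σ e ∧ m + 1 < N := by
  obtain ⟨x, hx⟩ := exists_flip hσ e
  have hne : e - x ≠ 0 := by
    intro h
    rw [sub_eq_zero] at h
    exact hx (by rw [← h])
  have hval1 : 1 ≤ (e - x).val := Nat.one_le_iff_ne_zero.mpr (by
    simpa [ZMod.val_eq_zero] using hne)
  have hvalN : (e - x).val < N := ZMod.val_lt _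
  refine ⟨(e - x).val - 1, ?_, by omega⟩
  have hc : ((e - x).val - 1 + 1 : ℕ) = (e - x).val := by omega
  rw [hc, cast_val_eq]
  simpa using hx

open scoped Classical in
noncomputable def mlen (σ : Config N) (e : ZMod N) : ℕ :=
  if h : ∃ m : ℕ, σ (e - ((m + 1 : ℕ) : ZMod N)) ≠ σ e then Nat.find h else 0

section mlen_props
variable {σ : Config N} (e : ZMod N)

lemma mlen_spec (hσ : ∃ i j : ZMod N, σ i ≠ σ j) : σ (e - ((mlen σ e + 1 : ℕ) : ZMod N)) ≠ σ e := by
  have h : ∃ m : ℕ, σ (e - ((m + 1 : ℕ) : ZMod N)) ≠ σ e :=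
    (mlen_ex hσ e).imp fun m hm => hm.1
  classical
  rw [mlen, dif_pos h]
  exact Nat.find_spec h

lemma mlen_le_of {j : ℕ} (hj : σ (e - ((j + 1 : ℕ) : ZMod N)) ≠ σ e) : mlen σ e ≤ j := by
  have h : ∃ m : ℕ, σ (e - ((m + 1 : ℕ) : ZMod N)) ≠ σ e := ⟨j, hj⟩
  classical
  rw [mlen, dif_pos h]
  exact Nat.find_le hj

lemma mlen_min (hσ : ∃ i j : ZMod N, σ i ≠ σ j) : ∀ t ≤ mlen σ e, σ (e - (t : ZMod N)) = σ e := by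
  have h : ∃ m : ℕ, σ (e - ((m + 1 : ℕ) : ZMod N)) ≠ σ e :=
    (mlen_ex hσ e).imp fun m hm => hm.1
  intro t ht
  match t, ht with
  | 0, _ => simp
  | (j+1), ht =>
    have hj : j < mlen σ e := by omega
    classical
    rw [mlen, dif_pos h] at hj
    have := Nat.find_min h hj
    simpa using this

lemma mlen_lt (hσ : ∃ i j : ZMod N, σ i ≠ σ j) : mlen σ e + 1 < N := by
  obtain ⟨m, hm, hmN⟩ := mlen_ex hσ e
  have := mlen_le_of e hm
  omega

end mlen_props

noncomputable def arcOf (σ : Config N) (e : ZMod N) : Finset (ZMod N) :=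
  arc (e - (mlen σ e : ZMod N)) (mlen σ e)

lemma mem_arcOf {σ : Config N} {e x : ZMod N} :
    x ∈ arcOf σ e ↔ ∃ s, s ≤ mlen σ e ∧ e - (s : ZMod N) = x := by
  rw [arcOf, mem_arc]
  constructor
  · rintro ⟨t, ht, rfl⟩
    refine ⟨mlen σ e - t, by omega, ?_⟩
    rw [Nat.cast_sub ht]
    ring
  · rintro ⟨s, hs, rfl⟩
    refine ⟨mlen σ e - s, by omega, ?_⟩
    rw [Nat.cast_sub hs]
    ring

/-- boundary endpoints of color `b` -/
def pts (σ : Config N) (b : Bool) : Finset (ZMod N) :=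
  Finset.univ.filter fun e => σ e = b ∧ σ e ≠ σ (e+1)

lemma mem_pts {σ : Config N} {b : Bool} {e : ZMod N} :
    e ∈ pts σ b ↔ σ e = b ∧ σ e ≠ σ (e+1) := by simp [pts]

lemma pts_balance (σ : Config N) : (pts σ true).card = (pts σ false).card := by
  classical
  have key : ∀ i : ZMod N,
      ((if σ i then (1:ℤ) else 0) - (if σ (i+1) then 1 else 0))
      = (if σ i = true ∧ σ i ≠ σ (i+1) then (1:ℤ) else 0)
        - (if σ i = false ∧ σ i ≠ σ (i+1) then (1:ℤ) else 0) := by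
    intro i; cases h1 : σ i <;> cases h2 : σ (i+1) <;> simp [h1, h2]
  have h0 : ∑ i : ZMod N, ((if σ i then (1:ℤ) else 0) - (if σ (i+1) then 1 else 0)) = 0 := by
    rw [Finset.sum_sub_distrib]
    have := Equiv.sum_comp (Equiv.addRight (1 : ZMod N))
      (fun i => if σ i then (1:ℤ) else 0)
    simp only [Equiv.coe_addRight] at this
    rw [sub_eq_zero]; exact this.symm
  rw [Finset.sum_congr rfl (fun i _ => key i), Finset.sum_sub_distrib, sub_eq_zero,
    Finset.sum_boole, Finset.sum_boole] at h0
  have h1 : (#(filter (fun x => σ x = true ∧ σ x ≠ σ (x + 1)) univ) : ℤ)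
      = #(filter (fun x => σ x = false ∧ σ x ≠ σ (x + 1)) univ) := h0
  have h2 : #(filter (fun x : ZMod N => σ x = true ∧ σ x ≠ σ (x + 1)) univ)
      = #(filter (fun x : ZMod N => σ x = false ∧ σ x ≠ σ (x + 1)) univ) := by
    exact_mod_cast h1
  simpa [pts, Finset.filter_congr_decidable] using h2

/-- constancy from no boundary -/
lemma eq_of_no_bdry (σ : Config N) (h : ∀ i : ZMod N, σ (i + 1) = σ i) :
    ∀ i j : ZMod N, σ i = σ j := by
  have key : ∀ (n : ℕ) (i : ZMod N), σ (i + (n : ZMod N)) = σ i := by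
    intro n
    induction n with
    | zero => simp
    | succ m ih =>
      intro i
      have hc : ((m + 1 : ℕ) : ZMod N) = (m : ZMod N) + 1 := by push_cast; ring
      rw [hc, ← add_assoc, h, ih]
  intro i j
  have hi := key i.val 0
  have hj := key j.val 0
  rw [zero_add, cast_val_eq] at hi hj
  rw [hi, hj]

lemma bool_ne_iff {x y : Bool} : x ≠ y ↔ x = !y := by cases x <;> cases y <;> simp

lemma bool_eq_of_ne_ne {x y z : Bool} (h1 : x ≠ z) (h2 : y ≠ z) : x = y := by
  cases x <;> cases y <;> cases z <;> simp_all

lemma not_constOn_univ {σ : Config N} (hσ : ∃ i j : ZMod N, σ i ≠ σ j) :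
    ¬ ConstOn σ (Finset.univ : Finset (ZMod N)) := by
  obtain ⟨i, j, hij⟩ := hσ
  intro h
  exact hij (h i (Finset.mem_univ _) j (Finset.mem_univ _))

lemma arc_proper {σ : Config N} (hσ : ∃ i j : ZMod N, σ i ≠ σ j) {a : ZMod N} {k : ℕ}
    (hc : ConstOn σ (arc a k)) : k + 1 < N := by
  by_contra h
  have hu : arc a k = (Finset.univ : Finset (ZMod N)) := arc_eq_univ (by omega)
  rw [hu] at hc
  exact not_constOn_univ hσ hc

lemma self_mem_arcOf {σ : Config N} {e : ZMod N} : e ∈ arcOf σ e :=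
  mem_arcOf.mpr ⟨0, Nat.zero_le _, by simp⟩

lemma endpoint_unique {σ : Config N} (hσ : ∃ i j : ZMod N, σ i ≠ σ j) {e x : ZMod N}
    (hx : x ∈ arcOf σ e) (hb : σ x ≠ σ (x + 1)) : x = e := by
  obtain ⟨s, hs, rfl⟩ := mem_arcOf.mp hx
  rcases Nat.eq_zero_or_pos s with h0 | h1
  · subst h0; simp
  · exfalso
    apply hb
    have h1' : e - (s : ZMod N) + 1 = e - ((s - 1 : ℕ) : ZMod N) := by
      rw [Nat.cast_sub h1]; push_cast; ring
    rw [h1', mlen_min e hσ (s - 1) (by omega), mlen_min e hσ s hs]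

lemma constOn_arcOf {σ : Config N} (hσ : ∃ i j : ZMod N, σ i ≠ σ j) (e : ZMod N) :
    ∀ x ∈ arcOf σ e, σ x = σ e := by
  intro x hx
  obtain ⟨s, hs, rfl⟩ := mem_arcOf.mp hx
  exact mlen_min e hσ s hs

lemma arcOf_max {σ : Config N} (hσ : ∃ i j : ZMod N, σ i ≠ σ j) {e : ZMod N}
    (he : σ e ≠ σ (e + 1)) {B : Finset (ZMod N)} (hB : IsArc B) (hBc : ConstOn σ B)
    (hAB : arcOf σ e ⊆ B) : arcOf σ e = B := by
  obtain ⟨b, l, rfl⟩ := hB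
  have hBa : ∀ x, x ∈ arc b l ↔ ∃ t, t ≤ l ∧ b + (t : ZMod N) = x := fun x => mem_arc
  have hlt : l + 1 < N := arc_proper hσ hBc
  have hm := mlen_lt e hσ
  -- e is the right endpoint of B
  have heB : e ∈ arc b l := hAB self_mem_arcOf
  obtain ⟨t, ht, hte⟩ := (hBa e).mp heB
  have htl : t = l := by
    by_contra hne
    apply he
    have h1 : e + 1 ∈ arc b l := by
      rw [← hte]
      have : b + (t : ZMod N) + 1 = b + ((t + 1 : ℕ) : ZMod N) := by push_cast; ring
      rw [this]
      exact mem_arc_of_le (by omega)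
    exact hBc e heB (e + 1) h1
  -- e - mlen is the left endpoint of B
  have hsB : e - ((mlen σ e : ℕ) : ZMod N) ∈ arc b l :=
    hAB (mem_arcOf.mpr ⟨mlen σ e, le_rfl, rfl⟩)
  obtain ⟨t', ht', hts⟩ := (hBa _).mp hsB
  have ht0 : t' = 0 := by
    by_contra hne
    have h1 : (1:ℕ) ≤ t' := by omega
    have hsub1 : e - ((mlen σ e : ℕ) : ZMod N) - 1 ∈ arc b l := by
      rw [← hts]
      have : b + (t' : ZMod N) - 1 = b + ((t' - 1 : ℕ) : ZMod N) := by
        rw [Nat.cast_sub h1]; push_cast; ring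
      rw [this]
      exact mem_arc_of_le (by omega)
    have heq := hBc _ hsub1 _ hsB
    have hval : σ (e - ((mlen σ e : ℕ) : ZMod N)) = σ e := mlen_min e hσ _ le_rfl
    have hspec := mlen_spec e hσ
    apply hspec
    have harith : e - ((mlen σ e + 1 : ℕ) : ZMod N)
        = e - ((mlen σ e : ℕ) : ZMod N) - 1 := by push_cast; ring
    rw [harith, heq, hval]
  -- conclude l = mlen
  rw [ht0] at hts
  rw [Nat.cast_zero, add_zero] at hts
  rw [htl] at hte
  have hlm : (l : ZMod N) = ((mlen σ e : ℕ) : ZMod N) := by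
    rw [hts] at hte
    linear_combination hte
  have hl : l = mlen σ e := natCast_inj (by omega) (by omega) hlm
  rw [arcOf, hts, hl]
  rfl

lemma arcOf_isMaxMonoArc {σ : Config N} (hσ : ∃ i j : ZMod N, σ i ≠ σ j) {e : ZMod N}
    (he : σ e ≠ σ (e + 1)) : IsMaxMonoArc σ (arcOf σ e) := by
  refine ⟨⟨e - ((mlen σ e : ℕ) : ZMod N), mlen σ e, rfl⟩, ?_, ?_⟩
  · intro x hx y hy
    rw [constOn_arcOf hσ e x hx, constOn_arcOf hσ e y hy]
  · intro B hB hBc hAB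
    exact arcOf_max hσ he hB hBc hAB

lemma maxarc_structure {σ : Config N} (hσ : ∃ i j : ZMod N, σ i ≠ σ j)
    {A : Finset (ZMod N)} (hA : IsMaxMonoArc σ A) :
    ∃ (a : ZMod N) (k : ℕ), k + 1 < N ∧ A = arc a k ∧
      (∀ t, t ≤ k → σ (a + (t : ZMod N)) = σ a) ∧
      σ (a - 1) ≠ σ a ∧ σ (a + (k : ZMod N) + 1) ≠ σ a := by
  obtain ⟨⟨a, k, hAeq⟩, hconst, hmax⟩ := hA
  have hAeq' : A = arc a k := hAeq
  rw [hAeq'] at hconst hmax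
  have hk : k + 1 < N := arc_proper hσ hconst
  have haA : a ∈ arc a k := by simpa using mem_arc_of_le (Nat.zero_le k) (a := a)
  have hval : ∀ t, t ≤ k → σ (a + (t : ZMod N)) = σ a :=
    fun t ht => hconst _ (mem_arc_of_le ht) a haA
  refine ⟨a, k, hk, hAeq', hval, ?_, ?_⟩
  · -- σ (a-1) ≠ σ a
    intro h
    have hBc : ConstOn σ (arc (a - 1) (k + 1)) := by
      have hv : ∀ x ∈ arc (a - 1) (k + 1), σ x = σ a := by
        intro x hx
        obtain ⟨t, ht, rfl⟩ := mem_arc.mp hx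
        rcases Nat.eq_zero_or_pos t with h0 | h1
        · subst h0; simpa using h
        · have : a - 1 + (t : ZMod N) = a + ((t - 1 : ℕ) : ZMod N) := by
            rw [Nat.cast_sub h1]; push_cast; ring
          rw [this]
          exact hval _ (by omega)
      intro x hx y hy; rw [hv x hx, hv y hy]
    have hsub : arc a k ⊆ arc (a - 1) (k + 1) := by
      intro x hx
      obtain ⟨t, ht, rfl⟩ := mem_arc.mp hx
      have : a + (t : ZMod N) = (a - 1) + ((t + 1 : ℕ) : ZMod N) := by push_cast; ring
      rw [this]
      exact mem_arc_of_le (by omega)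
    have heq := hmax _ (isArc_arc _ _) hBc hsub
    have hmem : a - 1 ∈ arc a k := by
      rw [heq]
      exact mem_arc.mpr ⟨0, Nat.zero_le _, by push_cast; ring⟩
    exact pred_not_mem hk hmem
  · -- σ (a+k+1) ≠ σ a
    intro h
    have hBc : ConstOn σ (arc a (k + 1)) := by
      have hv : ∀ x ∈ arc a (k + 1), σ x = σ a := by
        intro x hx
        obtain ⟨t, ht, rfl⟩ := mem_arc.mp hx
        rcases Nat.lt_or_ge t (k + 1) with h1 | h1
        · exact hval _ (by omega)
        · have ht1 : t = k + 1 := by omega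
          subst ht1
          have : a + ((k + 1 : ℕ) : ZMod N) = a + (k : ZMod N) + 1 := by push_cast; ring
          rw [this]
          exact h
      intro x hx y hy; rw [hv x hx, hv y hy]
    have hsub : arc a k ⊆ arc a (k + 1) := by
      intro x hx
      obtain ⟨t, ht, rfl⟩ := mem_arc.mp hx
      exact mem_arc_of_le (by omega)
    have heq := hmax _ (isArc_arc _ _) hBc hsub
    have hmem : a + ((k + 1 : ℕ) : ZMod N) ∈ arc a k := by
      rw [heq]; exact mem_arc_of_le le_rfl
    exact succ_not_mem hk hmem

/-- every maximal monochromatic arc is `arcOf` of its right endpoint -/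
lemma maxarc_eq_arcOf {σ : Config N} (hσ : ∃ i j : ZMod N, σ i ≠ σ j)
    {A : Finset (ZMod N)} (hA : IsMaxMonoArc σ A) :
    ∃ e : ZMod N, σ e ≠ σ (e + 1) ∧ (∀ i ∈ A, σ i = σ e) ∧ arcOf σ e = A := by
  obtain ⟨a, k, hk, hAeq, hval, hl, hr⟩ := maxarc_structure hσ hA
  refine ⟨a + (k : ZMod N), ?_, ?_, ?_⟩
  · intro hcon
    rw [hval k le_rfl] at hcon
    exact hr hcon.symm
  · intro i hi
    rw [hAeq] at hi
    obtain ⟨t, ht, rfl⟩ := mem_arc.mp hi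
    rw [hval t ht, hval k le_rfl]
  · -- mlen = k
    set e := a + (k : ZMod N) with he_def
    have hse : σ e = σ a := hval k le_rfl
    have hmk : mlen σ e = k := by
      have hle : mlen σ e ≤ k := by
        apply mlen_le_of
        have : e - ((k + 1 : ℕ) : ZMod N) = a - 1 := by rw [he_def]; push_cast; ring
        rw [this, hse]
        exact hl
      have hge : ¬ mlen σ e < k := by
        intro hlt
        apply mlen_spec e hσ
        have h1 : mlen σ e + 1 ≤ k := by omega
        have : e - ((mlen σ e + 1 : ℕ) : ZMod N) = a + ((k - (mlen σ e + 1) : ℕ) : ZMod N) := by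
          rw [he_def, Nat.cast_sub h1]; push_cast; ring
        rw [this, hval _ (by omega), hse]
      omega
    rw [hAeq, arcOf, hmk]
    have : e - ((k : ℕ) : ZMod N) = a := by rw [he_def]; ring
    rw [this]

lemma numArcs_eq (σ : Config N) (hσ : ∃ i j : ZMod N, σ i ≠ σ j) (b : Bool) :
    numArcs N σ b = (pts σ b).card := by
  classical
  unfold numArcs
  refine (Finset.card_bij (fun e _ => arcOf σ e) ?_ ?_ ?_).symm
  · intro e he
    obtain ⟨heb, hbd⟩ := mem_pts.mp he
    simp only [Finset.mem_filter, Finset.mem_univ, true_and]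
    exact ⟨arcOf_isMaxMonoArc hσ hbd,
      fun i hi => (constOn_arcOf hσ e i hi).trans heb⟩
  · intro e1 h1 e2 h2 heq
    obtain ⟨_, hbd1⟩ := mem_pts.mp h1
    have heq' : arcOf σ e1 = arcOf σ e2 := heq
    have : e1 ∈ arcOf σ e2 := heq' ▸ self_mem_arcOf
    exact endpoint_unique hσ this hbd1
  · intro A hA
    simp only [Finset.mem_filter, Finset.mem_univ, true_and] at hA
    obtain ⟨hAm, hAb⟩ := hA
    obtain ⟨e, hbd, hvals, heq⟩ := maxarc_eq_arcOf hσ hAm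
    have heA : e ∈ A := heq ▸ self_mem_arcOf
    exact ⟨e, mem_pts.mpr ⟨hAb e heA, hbd⟩, heq⟩

section flip
variable {σ : Config N} {a : ZMod N} {k : ℕ}

lemma flip_bdry (hk : k + 1 < N)
    (hconst : ∀ t, t ≤ k → σ (a + (t : ZMod N)) = σ a)
    (hl : σ (a - 1) ≠ σ a) (hr : σ (a + (k : ZMod N) + 1) ≠ σ a) (i : ZMod N) :
    (flipSpins (arc a k) σ i ≠ flipSpins (arc a k) σ (i + 1) ↔
      (σ i ≠ σ (i + 1) ∧ i ≠ a - 1 ∧ i ≠ a + (k : ZMod N))) ∧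
    (flipSpins (arc a k) σ i ≠ flipSpins (arc a k) σ (i + 1) →
      flipSpins (arc a k) σ i = σ i) := by
  have hpred : a - 1 ∉ arc a k := pred_not_mem hk
  have hsucc : a + ((k + 1 : ℕ) : ZMod N) ∉ arc a k := succ_not_mem hk
  have hsucc' : a + (k : ZMod N) + 1 ∉ arc a k := by
    have : a + (k : ZMod N) + 1 = a + ((k + 1 : ℕ) : ZMod N) := by push_cast; ring
    rw [this]; exact hsucc
  have hend : a + (k : ZMod N) ∈ arc a k := mem_arc_of_le le_rfl
  have ha : a ∈ arc a k := mem_arc.mpr ⟨0, Nat.zero_le _, by push_cast; ring⟩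
  have hvals : ∀ x ∈ arc a k, σ x = σ a := by
    intro x hx; obtain ⟨t, ht, rfl⟩ := mem_arc.mp hx; exact hconst t ht
  by_cases hi : i ∈ arc a k <;> by_cases hi1 : i + 1 ∈ arc a k
  · -- both in the arc
    have hvi := hvals i hi
    have hvi1 := hvals (i + 1) hi1
    have hne1 : i ≠ a - 1 := fun h => hpred (h ▸ hi)
    have hne2 : i ≠ a + (k : ZMod N) := by
      intro h
      rw [h] at hi1
      exact hsucc' hi1
    simp [flipSpins, hi, hi1, hvi, hvi1, hne1, hne2]
  · -- i in, i+1 out: i = a + k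
    have hieq : i = a + (k : ZMod N) := by
      obtain ⟨t, ht, rfl⟩ := mem_arc.mp hi
      rcases Nat.lt_or_ge t k with h1 | h1
      · exfalso
        apply hi1
        have : a + (t : ZMod N) + 1 = a + ((t + 1 : ℕ) : ZMod N) := by push_cast; ring
        rw [this]
        exact mem_arc_of_le (by omega)
      · have : t = k := by omega
        rw [this]
    have hvi := hvals i hi
    have hv1 : σ (i + 1) = !(σ a) := by
      rw [hieq]
      exact bool_ne_iff.mp hr
    constructor
    · constructor
      · intro hcon
        exfalso
        apply hcon
        simp only [flipSpins, if_pos hi, if_neg hi1]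
        rw [hvi, hv1]
    
      · rintro ⟨-, -, hne⟩
        exact absurd hieq hne
    · intro hcon
      exfalso
      apply hcon
      simp only [flipSpins, if_pos hi, if_neg hi1]
      rw [hvi, hv1]
  · -- i out, i+1 in: i = a - 1
    have hieq : i = a - 1 := by
      obtain ⟨t, ht, hte⟩ := mem_arc.mp hi1
      rcases Nat.eq_zero_or_pos t with h0 | h1
      · rw [h0] at hte
        push_cast at hte
        rw [add_zero] at hte
        linear_combination -hte
      · exfalso
        apply hi
        have : i = a + ((t - 1 : ℕ) : ZMod N) := by
          rw [Nat.cast_sub h1]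
          push_cast
          linear_combination -hte
        rw [this]
        exact mem_arc_of_le (by omega)
    have hv0 : σ i = !(σ a) := by rw [hieq]; exact bool_ne_iff.mp hl
    have hv1 : σ (i + 1) = σ a := by
      have : i + 1 = a := by rw [hieq]; ring
      rw [this]
    have hfalse : ¬ (flipSpins (arc a k) σ i ≠ flipSpins (arc a k) σ (i + 1)) := by
      intro hcon
      apply hcon
      simp only [flipSpins, if_neg hi, if_pos hi1]
      rw [hv0, hv1]
    constructor
    · constructor
      · intro hcon; exact absurd hcon hfalse
      · rintro ⟨-, hne, -⟩; exact absurd hieq hne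
    · intro hcon; exact absurd hcon hfalse
  · -- both out
    have hne1 : i ≠ a - 1 := by
      intro h
      apply hi1
      rw [h, sub_add_cancel]
      exact ha
    have hne2 : i ≠ a + (k : ZMod N) := fun h => hi (h ▸ hend)
    simp [flipSpins, hi, hi1, hne1, hne2]

lemma pts_flip (hk : k + 1 < N)
    (hconst : ∀ t, t ≤ k → σ (a + (t : ZMod N)) = σ a)
    (hl : σ (a - 1) ≠ σ a) (hr : σ (a + (k : ZMod N) + 1) ≠ σ a) (b' : Bool) :
    pts (flipSpins (arc a k) σ) b'
      = (pts σ b').erase (if b' = σ a then a + (k : ZMod N) else a - 1) := by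
  ext x
  rw [Finset.mem_erase, mem_pts, mem_pts]
  obtain ⟨hiff, himp⟩ := flip_bdry hk hconst hl hr x
  have hva : σ (a + (k : ZMod N)) = σ a := hconst k le_rfl
  constructor
  · rintro ⟨hxb, hbd⟩
    obtain ⟨hσbd, hne1, hne2⟩ := hiff.mp hbd
    have hxσ : σ x = b' := (himp hbd) ▸ hxb
    refine ⟨?_, hxσ, hσbd⟩
    by_cases hba : b' = σ a
    · rw [if_pos hba]; exact hne2
    · rw [if_neg hba]; exact hne1
  · rintro ⟨hne, hxσ, hσbd⟩
    have hne1 : x ≠ a - 1 := by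
      by_cases hba : b' = σ a
      · intro h
        rw [h] at hxσ
        exact hl (hxσ.trans hba)
      · rw [if_neg hba] at hne; exact hne
    have hne2 : x ≠ a + (k : ZMod N) := by
      by_cases hba : b' = σ a
      · rw [if_pos hba] at hne; exact hne
      · intro h
        rw [h, hva] at hxσ
        exact hba hxσ.symm
    have hbd : flipSpins (arc a k) σ x ≠ flipSpins (arc a k) σ (x + 1) :=
      hiff.mpr ⟨hσbd, hne1, hne2⟩
    exact ⟨(himp hbd).trans hxσ, hbd⟩

lemma card_pts_flip (hk : k + 1 < N)
    (hconst : ∀ t, t ≤ k → σ (a + (t : ZMod N)) = σ a)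
    (hl : σ (a - 1) ≠ σ a) (hr : σ (a + (k : ZMod N) + 1) ≠ σ a) (b' : Bool) :
    (pts (flipSpins (arc a k) σ) b').card = (pts σ b').card - 1 := by
  rw [pts_flip hk hconst hl hr b']
  apply Finset.card_erase_of_mem
  by_cases hba : b' = σ a
  · rw [if_pos hba]
    refine mem_pts.mpr ⟨(hconst k le_rfl).trans hba.symm, ?_⟩
    rw [hconst k le_rfl]
    exact fun h => hr h.symm
  · rw [if_neg hba]
    refine mem_pts.mpr ⟨bool_eq_of_ne_ne hl hba, ?_⟩
    rw [sub_add_cancel]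
    exact hl

end flip

end FlipAux

open FlipAux in
/-- **Flipping a maximal monochromatic arc.**  Let `σ` be non-constant with
exactly `c` maximal monochromatic arcs of value `+1`.  If `A` is any maximal
monochromatic arc of `σ`, then: if `c = 1` the flipped configuration `σ^A` is
constant, and if `c ≥ 2` it is non-constant with exactly `c − 1` maximal
monochromatic arcs of value `+1` (and `c − 1` of value `−1`). -/
theorem flip_maxMonoArc (N : ℕ) (hN : 3 ≤ N) [NeZero N] (σ : Config N)
    (hσ : ∃ i j : ZMod N, σ i ≠ σ j) (c : ℕ) (hc : numArcs N σ true = c)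
    (A : Finset (ZMod N)) (hA : IsMaxMonoArc σ A) :
    (c = 1 → ∀ i j : ZMod N, flipSpins A σ i = flipSpins A σ j) ∧
    (2 ≤ c →
      (∃ i j : ZMod N, flipSpins A σ i ≠ flipSpins A σ j) ∧
      numArcs N (flipSpins A σ) true = c - 1 ∧
      numArcs N (flipSpins A σ) false = c - 1) := by
  obtain ⟨a, k, hk, hAeq, hval, hl, hr⟩ := maxarc_structure hσ hA
  subst hAeq
  have hT : (pts σ true).card = c := by rw [← numArcs_eq σ hσ true]; exact hc
  have hF : (pts σ false).card = c := by rw [← pts_balance]; exact hT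
  have hflip : ∀ b', (pts (flipSpins (arc a k) σ) b').card = c - 1 := by
    intro b'
    rw [card_pts_flip hk hval hl hr b']
    cases b'
    · rw [hF]
    · rw [hT]
  constructor
  · intro hc1
    have h0 : ∀ b', pts (flipSpins (arc a k) σ) b' = ∅ := by
      intro b'
      apply Finset.card_eq_zero.mp
      rw [hflip b', hc1]
    have hnb : ∀ i : ZMod N, flipSpins (arc a k) σ (i + 1) = flipSpins (arc a k) σ i := by
      intro i
      by_contra hcon
      have hmem : i ∈ pts (flipSpins (arc a k) σ) (flipSpins (arc a k) σ i) :=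
        mem_pts.mpr ⟨rfl, fun h => hcon h.symm⟩
      rw [h0] at hmem
      exact absurd hmem (Finset.notMem_empty i)
    exact eq_of_no_bdry _ hnb
  · intro hc2
    have hpos : 0 < (pts (flipSpins (arc a k) σ) true).card := by
      rw [hflip]; omega
    obtain ⟨e, he⟩ := Finset.card_pos.mp hpos
    obtain ⟨-, hbd⟩ := mem_pts.mp he
    have hσ' : ∃ i j : ZMod N, flipSpins (arc a k) σ i ≠ flipSpins (arc a k) σ j :=
      ⟨e, e + 1, hbd⟩
    exact ⟨hσ', by rw [numArcs_eq _ hσ' true, hflip],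
      by rw [numArcs_eq _ hσ' false, hflip]⟩
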